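/- arXiv:2505.24084 — 3 statements merged into one kernel-verified Lean document; each statement's English description precedes it below -/
import Mathlib

section
/- Let E be a real Banach space and let I be a closed ideal of C_ph(B_{E*}). Then there exists a weak*-closed positively homogeneous subset K of B_{E*} such that I = { f ∈ C_ph(B_{E*}) : f(x*) = 0 for all x* ∈ K }, and moreover for every f ∈ C_ph(B_{E*}) the distance from f to I equals sup_{x* ∈ K} |f(x*)| (equivalently, the map f + I ↦ f|_K is a surjective lattice isometry from C_ph(B_{E*})/I onto C_ph(K)). -/
noncomputable section

variable (E : Type*) [NormedAddCommGroup E] [NormedSpace ℝ E]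

/-- The closed unit ball of the dual of `E`, as a subset of the weak*-dual;
its subtype topology is the weak* topology. -/
def BallD : Set (WeakDual ℝ E) :=
  {φ : WeakDual ℝ E | ‖WeakDual.toStrongDual φ‖ ≤ 1}

instance : CompactSpace (BallD E) := by
  apply isCompact_iff_compactSpace.mp
  have h := WeakDual.isCompact_closedBall (𝕜 := ℝ) (E := E) 0 1
  convert h using 1
  ext φ
  simp [BallD, Metric.mem_closedBall, dist_zero_right]

/-- The space `C_ph(B_{E*})` of weak*-continuous positively homogeneous real functions
on the dual unit ball, as a subset of `C(B_{E*}, ℝ)` (which carries the supremum norm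
and the pointwise order). -/
def Cph : Set C(BallD E, ℝ) :=
  {f | ∀ (φ : BallD E) (c : ℝ), 0 ≤ c →
    ∀ h : c • (φ : WeakDual ℝ E) ∈ BallD E, f ⟨c • (φ : WeakDual ℝ E), h⟩ = c * f φ}

variable {E}

lemma zero_mem_ballD : (0 : WeakDual ℝ E) ∈ BallD E := by
  simp [BallD]

lemma cph_zero_pt {f : C(BallD E, ℝ)} (hf : f ∈ Cph E) (h0 : (0 : WeakDual ℝ E) ∈ BallD E) :
    f ⟨0, h0⟩ = 0 := by
  have h : (0:ℝ) • ((⟨0, h0⟩ : BallD E) : WeakDual ℝ E) ∈ BallD E := by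
    simpa using h0
  have := hf ⟨0, h0⟩ 0 le_rfl h
  rw [zero_mul] at this
  rw [← this]
  congr 1
  ext
  simp

lemma cph_zero_fun : (0 : C(BallD E, ℝ)) ∈ Cph E := by
  intro φ c hc h
  simp

lemma cph_add (f g : C(BallD E, ℝ)) (hf : f ∈ Cph E) (hg : g ∈ Cph E) :
    f + g ∈ Cph E := by
  intro φ c hc h
  simp only [ContinuousMap.add_apply, hf φ c hc h, hg φ c hc h]
  ring

lemma cph_smul (a : ℝ) (f : C(BallD E, ℝ)) (hf : f ∈ Cph E) :
    a • f ∈ Cph E := by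
  intro φ c hc h
  simp only [ContinuousMap.smul_apply, hf φ c hc h, smul_eq_mul]
  ring

lemma cph_abs {f : C(BallD E, ℝ)} (hf : f ∈ Cph E) : |f| ∈ Cph E := by
  intro φ c hc h
  simp only [ContinuousMap.abs_apply, hf φ c hc h, abs_mul, abs_of_nonneg hc]

lemma cph_sup (f g : C(BallD E, ℝ)) (hf : f ∈ Cph E) (hg : g ∈ Cph E) :
    f ⊔ g ∈ Cph E := by
  intro φ c hc h
  simp only [ContinuousMap.sup_apply, hf φ c hc h, hg φ c hc h]
  exact (mul_max_of_nonneg _ _ hc).symm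

lemma cph_inf (f g : C(BallD E, ℝ)) (hf : f ∈ Cph E) (hg : g ∈ Cph E) :
    f ⊓ g ∈ Cph E := by
  intro φ c hc h
  simp only [ContinuousMap.inf_apply, hf φ c hc h, hg φ c hc h]
  exact (mul_min_of_nonneg _ _ hc).symm

lemma cph_neg (f : C(BallD E, ℝ)) (hf : f ∈ Cph E) : -f ∈ Cph E := by
  intro φ c hc h
  simp only [ContinuousMap.neg_apply, hf φ c hc h]
  ring

lemma est_aux (a b : ℝ) (hb : 0 ≤ b) :
    |a - (min (max a 0) b - min (max (-a) 0) b)| ≤ max (|a| - b) 0 := by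
  rcases le_total 0 a with ha | ha
  · rw [max_eq_left ha, max_eq_right (neg_nonpos.mpr ha), min_eq_left hb, sub_zero,
      abs_of_nonneg ha]
    rcases le_total a b with h | h
    · rw [min_eq_left h, sub_self, abs_zero]; exact le_max_right _ _
    · rw [min_eq_right h, abs_of_nonneg (by linarith)]; exact le_max_left _ _
  · rw [max_eq_right ha, max_eq_left (neg_nonneg.mpr ha), min_eq_left hb, zero_sub,
      abs_of_nonpos ha]
    rcases le_total (-a) b with h | h
    · rw [min_eq_left h]; simp
    · rw [min_eq_right h, sub_neg_eq_add, abs_of_nonpos (by linarith)]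
      have : -(a + b) = -a - b := by ring
      rw [this]; exact le_max_left _ _

/-- **Statement 3.** Every closed ideal `I` of `C_ph(B_{E*})` is the set of functions
vanishing on a weak*-closed positively homogeneous subset `K ⊆ B_{E*}`, and the
quotient `C_ph(B_{E*})/I` is lattice isometric to `C_ph(K)` via `f + I ↦ f|_K`
(equivalently, `dist(f, I) = sup_{x* ∈ K} |f(x*)|` for every `f ∈ C_ph(B_{E*})`). -/
theorem closed_ideal_of_Cph_is_zero_set
    [CompleteSpace E]
    (I : Set C(BallD E, ℝ))
    (hIsub : I ⊆ Cph E)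
    (hIzero : (0 : C(BallD E, ℝ)) ∈ I)
    (hIadd : ∀ f ∈ I, ∀ g ∈ I, f + g ∈ I)
    (hIsmul : ∀ (c : ℝ), ∀ f ∈ I, c • f ∈ I)
    (hIsolid : ∀ f ∈ Cph E, ∀ g ∈ I, (∀ φ : BallD E, |f φ| ≤ |g φ|) → f ∈ I)
    (hIclosed : ∀ f ∈ Cph E, f ∈ closure I → f ∈ I) :
    ∃ K : Set (WeakDual ℝ E),
      K ⊆ BallD E ∧
      IsClosed K ∧
      (0 : WeakDual ℝ E) ∈ K ∧
      (∀ φ ∈ K, φ ≠ 0 → ∀ c : ℝ, 0 < c → c ≤ 1 / ‖WeakDual.toStrongDual φ‖ →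
        c • φ ∈ K) ∧
      I = {f | f ∈ Cph E ∧ ∀ φ : BallD E, (φ : WeakDual ℝ E) ∈ K → f φ = 0} ∧
      ∀ f ∈ Cph E,
        Metric.infDist f I = sSup {r : ℝ | ∃ φ : BallD E, (φ : WeakDual ℝ E) ∈ K ∧ r = |f φ|} := by
  classical
  set Z : Set (BallD E) := {x | ∀ g ∈ I, g x = 0} with hZ
  set K : Set (WeakDual ℝ E) := Subtype.val '' Z with hK
  have hKsub : K ⊆ BallD E := by
    rintro ψ ⟨x, _, rfl⟩
    exact x.2
  have memK : ∀ x : BallD E, ((x : WeakDual ℝ E) ∈ K ↔ ∀ g ∈ I, g x = 0) := by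
    intro x
    constructor
    · rintro ⟨y, hy, hyx⟩
      have : y = x := Subtype.ext hyx
      exact this ▸ hy
    · intro h
      exact ⟨x, h, rfl⟩
  have hZclosed : IsClosed Z := by
    have : Z = ⋂ g ∈ I, {x : BallD E | g x = 0} := by
      ext x; simp [hZ]
    rw [this]
    exact isClosed_biInter fun g _ => isClosed_eq (map_continuous g) continuous_const
  have hKclosed : IsClosed K :=
    ((hZclosed.isCompact).image continuous_subtype_val).isClosed
  have h0K : (0 : WeakDual ℝ E) ∈ K :=
    ⟨⟨0, zero_mem_ballD⟩, fun g hg => cph_zero_pt (hIsub hg) _, rfl⟩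
  -- the key approximation property
  have key : ∀ f ∈ Cph E, ∀ ε : ℝ, 0 < ε → ∃ h ∈ I,
      dist f h ≤ sSup {r : ℝ | ∃ φ : BallD E, (φ : WeakDual ℝ E) ∈ K ∧ r = |f φ|} + ε := by
    intro f hf ε hε
    set S := {r : ℝ | ∃ φ : BallD E, (φ : WeakDual ℝ E) ∈ K ∧ r = |f φ|} with hS
    have hSbdd : BddAbove S := by
      refine ⟨‖f‖, ?_⟩
      rintro r ⟨φ, _, rfl⟩
      calc |f φ| = ‖f φ‖ := (Real.norm_eq_abs _).symm
        _ ≤ ‖f‖ := f.norm_coe_le_norm φ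
    set s := sSup S with hs
    have hs0 : 0 ≤ s := by
      refine le_csSup hSbdd ⟨⟨0, zero_mem_ballD⟩, h0K, ?_⟩
      rw [cph_zero_pt hf, abs_zero]
    have hsle : ∀ φ : BallD E, ((φ : WeakDual ℝ E) ∈ K) → |f φ| ≤ s :=
      fun φ hφ => le_csSup hSbdd ⟨φ, hφ, rfl⟩
    set L := {x : BallD E | s + ε ≤ |f x|} with hL
    have hLclosed : IsClosed L := isClosed_le continuous_const (map_continuous f).abs
    by_cases hLne : L.Nonempty
    · -- build a strictly positive element of I on L
      have hLK : ∀ x ∈ L, ∃ g : {g : C(BallD E, ℝ) // g ∈ I}, g.1 x ≠ 0 := by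
        intro x hx
        by_contra hcon
        push_neg at hcon
        have hxK : (x : WeakDual ℝ E) ∈ K := (memK x).mpr fun g hg => hcon ⟨g, hg⟩
        have h1 := hsle x hxK
        have h2 : s + ε ≤ |f x| := hx
        linarith
      obtain ⟨t, ht⟩ := hLclosed.isCompact.elim_finite_subcover
        (fun g : {g : C(BallD E, ℝ) // g ∈ I} => {x | g.1 x ≠ 0})
        (fun g => (isClosed_eq (map_continuous g.1) continuous_const).isOpen_compl)
        (by
          intro x hx
          obtain ⟨g, hg⟩ := hLK x hx
          exact Set.mem_iUnion.mpr ⟨g, hg⟩)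
      set G : C(BallD E, ℝ) := ∑ g ∈ t, |g.1| with hG
      have hGI : G ∈ I := by
        refine Finset.sum_induction _ (· ∈ I) (fun a b ha hb => hIadd a ha b hb) hIzero ?_
        intro g _
        refine hIsolid _ (cph_abs (hIsub g.2)) g.1 g.2 fun φ => ?_
        simp [abs_abs]
      have hGcph : G ∈ Cph E :=
        Finset.sum_induction _ (· ∈ Cph E) cph_add cph_zero_fun
          (fun g _ => cph_abs (hIsub g.2))
      have hGapp : ∀ x : BallD E, G x = ∑ g ∈ t, |g.1 x| := by
        intro x
        simp [hG]
      have hG0 : ∀ x, 0 ≤ G x := by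
        intro x
        rw [hGapp x]
        exact Finset.sum_nonneg fun g _ => abs_nonneg _
      have hGpos : ∀ x ∈ L, 0 < G x := by
        intro x hx
        obtain ⟨g, hgt, hgx⟩ := Set.mem_iUnion₂.mp (ht hx)
        have h1 : |g.1 x| ≤ G x := by
          rw [hGapp x]
          exact Finset.single_le_sum (f := fun i : {g : C(BallD E, ℝ) // g ∈ I} => |i.1 x|)
            (fun i _ => abs_nonneg _) hgt
        exact lt_of_lt_of_le (abs_pos.mpr hgx) h1
      obtain ⟨x0, hx0L, hmin⟩ :=
        hLclosed.isCompact.exists_isMinOn hLne (map_continuous G).continuousOn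
      set δ := G x0 with hδdef
      have hδ : 0 < δ := hGpos x0 hx0L
      set c := ‖f‖ / δ with hc
      have hc0 : 0 ≤ c := div_nonneg (norm_nonneg f) hδ.le
      set p := (f ⊔ 0) ⊓ (c • G) with hp
      set q := ((-f) ⊔ 0) ⊓ (c • G) with hq
      have hcG0 : ∀ x, 0 ≤ (c • G) x := fun x => mul_nonneg hc0 (hG0 x)
      have hpcph : p ∈ Cph E :=
        cph_inf _ _ (cph_sup _ _ hf cph_zero_fun) (cph_smul c _ hGcph)
      have hqcph : q ∈ Cph E :=
        cph_inf _ _ (cph_sup _ _ (cph_neg _ hf) cph_zero_fun) (cph_smul c _ hGcph)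
      have hcGI : c • G ∈ I := hIsmul c G hGI
      have hpI : p ∈ I := by
        refine hIsolid p hpcph _ hcGI fun φ => ?_
        have h1 : 0 ≤ p φ := le_min (le_max_right _ _) (hcG0 φ)
        have h2 : p φ ≤ (c • G) φ := min_le_right _ _
        rw [abs_of_nonneg h1, abs_of_nonneg (hcG0 φ)]
        exact h2
      have hqI : q ∈ I := by
        refine hIsolid q hqcph _ hcGI fun φ => ?_
        have h1 : 0 ≤ q φ := le_min (le_max_right _ _) (hcG0 φ)
        have h2 : q φ ≤ (c • G) φ := min_le_right _ _
        rw [abs_of_nonneg h1, abs_of_nonneg (hcG0 φ)]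
        exact h2
      have hpqI : p - q ∈ I := by
        have := hIadd p hpI ((-1 : ℝ) • q) (hIsmul _ q hqI)
        simpa [sub_eq_add_neg] using this
      refine ⟨p - q, hpqI, (ContinuousMap.dist_le (by linarith)).mpr ?_⟩
      intro x
      rw [Real.dist_eq]
      have hxval : (p - q) x = min (max (f x) 0) (c * G x) - min (max (-(f x)) 0) (c * G x) := by
        simp [hp, hq, smul_eq_mul]
      rw [hxval]
      refine le_trans (est_aux (f x) (c * G x) (mul_nonneg hc0 (hG0 x))) ?_
      rw [max_le_iff]
      constructor
      · by_cases hxL : x ∈ L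
        · have h1 : δ ≤ G x := hmin hxL
          have h2 : c * δ ≤ c * G x := mul_le_mul_of_nonneg_left h1 hc0
          have h3 : c * δ = ‖f‖ := div_mul_cancel₀ _ hδ.ne'
          have h4 : |f x| ≤ ‖f‖ := by
            rw [← Real.norm_eq_abs]; exact f.norm_coe_le_norm x
          linarith
        · have h1 : |f x| < s + ε := not_le.mp hxL
          have h2 : 0 ≤ c * G x := mul_nonneg hc0 (hG0 x)
          linarith
      · linarith
    · -- L is empty : take h = 0
      refine ⟨0, hIzero, (ContinuousMap.dist_le (by linarith)).mpr ?_⟩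
      intro x
      have hx : ¬ (s + ε ≤ |f x|) := fun hx => hLne ⟨x, hx⟩
      rw [Real.dist_eq]
      simpa using (not_le.mp hx).le
  refine ⟨K, hKsub, hKclosed, h0K, ?_, ?_, ?_⟩
  · -- positive homogeneity
    intro φ hφ hne c hc hc1
    have hφB : φ ∈ BallD E := hKsub hφ
    have hn0 : WeakDual.toStrongDual φ ≠ 0 := by
      intro h
      exact hne (by simpa using WeakDual.toStrongDual.injective (h.trans (map_zero _).symm))
    have hn : 0 < ‖WeakDual.toStrongDual φ‖ := norm_pos_iff.mpr hn0
    have hmem : c • φ ∈ BallD E := by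
      have hnorm : ‖WeakDual.toStrongDual (c • φ)‖ = c * ‖WeakDual.toStrongDual φ‖ := by
        rw [map_smul, norm_smul, Real.norm_eq_abs, abs_of_nonneg hc.le]
      show ‖WeakDual.toStrongDual (c • φ)‖ ≤ 1
      rw [hnorm]
      calc c * ‖WeakDual.toStrongDual φ‖
          ≤ (1 / ‖WeakDual.toStrongDual φ‖) * ‖WeakDual.toStrongDual φ‖ :=
            mul_le_mul_of_nonneg_right hc1 hn.le
        _ = 1 := one_div_mul_cancel hn.ne'
    refine (memK ⟨c • φ, hmem⟩).mpr ?_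
    intro g hg
    have hφ0 : g ⟨φ, hφB⟩ = 0 := (memK ⟨φ, hφB⟩).mp hφ g hg
    have := hIsub hg ⟨φ, hφB⟩ c hc.le hmem
    rw [this, hφ0, mul_zero]
  · -- I is the set of functions vanishing on K
    ext g
    constructor
    · intro hg
      exact ⟨hIsub hg, fun φ hφ => (memK φ).mp hφ g hg⟩
    · rintro ⟨hgc, hgv⟩
      refine hIclosed g hgc (Metric.mem_closure_iff.mpr ?_)
      intro ε hε
      obtain ⟨h, hI, hd⟩ := key g hgc (ε / 2) (by linarith)
      have hsup : sSup {r : ℝ | ∃ φ : BallD E, (φ : WeakDual ℝ E) ∈ K ∧ r = |g φ|} = 0 := by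
        apply le_antisymm
        · refine csSup_le ⟨|g ⟨0, zero_mem_ballD⟩|, ⟨0, zero_mem_ballD⟩, h0K, rfl⟩ ?_
          rintro r ⟨φ, hφ, rfl⟩
          rw [hgv φ hφ, abs_zero]
        · refine le_csSup ⟨‖g‖, ?_⟩ ⟨⟨0, zero_mem_ballD⟩, h0K, ?_⟩
          · rintro r ⟨φ, _, rfl⟩
            calc |g φ| = ‖g φ‖ := (Real.norm_eq_abs _).symm
              _ ≤ ‖g‖ := g.norm_coe_le_norm φ
          · rw [cph_zero_pt hgc, abs_zero]
      rw [hsup, zero_add] at hd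
      exact ⟨h, hI, lt_of_le_of_lt hd (by linarith)⟩
  · -- distance formula
    intro f hf
    set S := {r : ℝ | ∃ φ : BallD E, (φ : WeakDual ℝ E) ∈ K ∧ r = |f φ|} with hS
    have hSne : S.Nonempty := ⟨|f ⟨0, zero_mem_ballD⟩|, ⟨0, zero_mem_ballD⟩, h0K, rfl⟩
    have hIne : I.Nonempty := ⟨0, hIzero⟩
    apply le_antisymm
    · by_contra hlt
      push_neg at hlt
      obtain ⟨h, hI, hd⟩ := key f hf ((Metric.infDist f I - sSup S) / 2) (by linarith)
      have := Metric.infDist_le_dist_of_mem (x := f) hI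
      linarith
    · by_contra hlt
      push_neg at hlt
      obtain ⟨h, hI, hdh⟩ := (Metric.infDist_lt_iff hIne).mp hlt
      have hub : sSup S ≤ dist f h := by
        refine csSup_le hSne ?_
        rintro r ⟨φ, hφ, rfl⟩
        have h0 : h φ = 0 := (memK φ).mp hφ h hI
        calc |f φ| = dist (f φ) (h φ) := by rw [Real.dist_eq, h0, sub_zero]
          _ ≤ dist f h := ContinuousMap.dist_apply_le_dist φ
      linarith

end
end

section
/- Let X be a Banach lattice and let x₀ ∈ X be a nonzero positive element. If x₀ is not an atom, then there exists y₀ ∈ X with 0 ≤ y₀ ≤ x₀ such that for every λ > 0 neither λx₀ ≤ y₀ nor λx₀ ≤ x₀ − y₀ holds. -/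
/-- In a normed lattice group with a real normed-space structure, nonnegative real
multiples of positive elements are positive (proved via dyadic density and closedness
of the positive cone). -/
private lemma smul_nonneg_aux {X : Type*} [NormedAddCommGroup X] [Lattice X] [HasSolidNorm X] [IsOrderedAddMonoid X] [NormedSpace ℝ X]
    (t : ℝ) (z : X) (ht : 0 ≤ t) (hz : 0 ≤ z) : 0 ≤ t • z := by
  -- halves of z are nonnegative
  have hhalf : ∀ n : ℕ, 0 ≤ ((1:ℝ) / 2 ^ n) • z := by
    intro n
    induction n with
    | zero => simpa using hz
    | succ m ih =>
      apply nsmul_two_semiclosed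
      have : (2 : ℕ) • (((1:ℝ) / 2 ^ (m + 1)) • z) = ((1:ℝ) / 2 ^ m) • z := by
        rw [← Nat.cast_smul_eq_nsmul ℝ, smul_smul]
        norm_num
        ring_nf
      rwa [this]
  -- dyadic multiples of z are nonnegative
  have hdy : ∀ n k : ℕ, 0 ≤ ((k : ℝ) / 2 ^ n) • z := by
    intro n k
    have h1 : ((k:ℝ) / 2 ^ n) • z = k • (((1:ℝ) / 2 ^ n) • z) := by
      rw [← Nat.cast_smul_eq_nsmul ℝ, smul_smul]
      ring_nf
    rw [h1]
    exact nsmul_nonneg (hhalf n) k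
  -- approximate t by dyadics
  have h2pos : ∀ n : ℕ, (0:ℝ) < 2 ^ n := fun n => by positivity
  have hlo : ∀ n : ℕ, t - ((1:ℝ)/2)^n ≤ (⌊t * 2 ^ n⌋₊ : ℝ) / 2 ^ n := by
    intro n
    rw [le_div_iff₀ (h2pos n)]
    have h := Nat.lt_floor_add_one (t * 2 ^ n)
    have h2 : ((1:ℝ)/2)^n * 2^n = 1 := by
      rw [← mul_pow]; norm_num
    nlinarith [h2pos n]
  have hhi : ∀ n : ℕ, (⌊t * 2 ^ n⌋₊ : ℝ) / 2 ^ n ≤ t := by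
    intro n
    rw [div_le_iff₀ (h2pos n)]
    exact Nat.floor_le (by positivity)
  have htend : Filter.Tendsto (fun n : ℕ => (⌊t * 2 ^ n⌋₊ : ℝ) / 2 ^ n)
      Filter.atTop (nhds t) := by
    have hg : Filter.Tendsto (fun n : ℕ => t - ((1:ℝ)/2)^n) Filter.atTop (nhds t) := by
      have := tendsto_pow_atTop_nhds_zero_of_lt_one (by norm_num : (0:ℝ) ≤ 1/2)
        (by norm_num : (1:ℝ)/2 < 1)
      simpa using (tendsto_const_nhds (x := t)).sub this
    exact tendsto_of_tendsto_of_tendsto_of_le_of_le hg tendsto_const_nhds hlo hhi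
  have htendz : Filter.Tendsto (fun n : ℕ => ((⌊t * 2 ^ n⌋₊ : ℝ) / 2 ^ n) • z)
      Filter.atTop (nhds (t • z)) := htend.smul_const z
  have hclosed : IsClosed {w : X | 0 ≤ w} := isClosed_le continuous_const continuous_id
  exact hclosed.mem_of_tendsto htendz (Filter.Eventually.of_forall fun n => hdy n _)

/-- **Statement 15.** Let `X` be a Banach lattice and `x₀` a nonzero positive element.
If `x₀` is not an atom (i.e. there is `x` with `0 ≤ x ≤ x₀` which is not a nonnegative
scalar multiple of `x₀`), then there exists `y₀` with `0 ≤ y₀ ≤ x₀` such that for every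
`λ > 0` neither `λ • x₀ ≤ y₀` nor `λ • x₀ ≤ x₀ - y₀` holds. -/
theorem exists_no_multiple_below_of_not_atom
    (X : Type*) [NormedAddCommGroup X] [Lattice X] [HasSolidNorm X] [IsOrderedAddMonoid X] [NormedSpace ℝ X] [CompleteSpace X]
    (x₀ : X) (hx₀_pos : 0 ≤ x₀) (hx₀_ne : x₀ ≠ 0)
    (hnotatom : ∃ x : X, 0 ≤ x ∧ x ≤ x₀ ∧ ∀ t : ℝ, 0 ≤ t → x ≠ t • x₀) :
    ∃ y₀ : X, 0 ≤ y₀ ∧ y₀ ≤ x₀ ∧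
      ∀ l : ℝ, 0 < l → ¬ (l • x₀ ≤ y₀) ∧ ¬ (l • x₀ ≤ x₀ - y₀) := by
  obtain ⟨x, hx0, hxx0, hxne⟩ := hnotatom
  -- positive scalars preserve order
  have hsmul_le : ∀ {c : ℝ} {u v : X}, 0 ≤ c → u ≤ v → c • u ≤ c • v := by
    intro c u v hc huv
    have h := smul_nonneg_aux c (v - u) hc (sub_nonneg.2 huv)
    rw [smul_sub, sub_nonneg] at h
    exact h
  have hmono : ∀ {s t : ℝ}, s ≤ t → s • x₀ ≤ t • x₀ := by
    intro s t hst
    have h : (0:X) ≤ (t - s) • x₀ := smul_nonneg_aux _ _ (sub_nonneg.2 hst) hx₀_pos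
    rw [sub_smul, sub_nonneg] at h
    exact h
  have hx_ne0 : x ≠ 0 := by
    intro h
    exact hxne 0 le_rfl (by simp [h])
  have hcont : Continuous fun t : ℝ => t • x₀ := continuous_id.smul continuous_const
  set A : Set ℝ := {t : ℝ | t • x₀ ≤ x} with hA
  set B : Set ℝ := {t : ℝ | x ≤ t • x₀} with hB
  have hAclosed : IsClosed A := isClosed_le hcont continuous_const
  have hBclosed : IsClosed B := isClosed_le continuous_const hcont
  have hA0 : (0:ℝ) ∈ A := by simp [hA, hx0]
  have hB1 : (1:ℝ) ∈ B := by simp [hB, hxx0]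
  have hAbdd : BddAbove A := by
    refine ⟨1, fun t ht => ?_⟩
    by_contra h
    push_neg at h
    have h1 : t • x₀ ≤ x₀ := le_trans ht hxx0
    have h2 : x₀ ≤ t • x₀ := by simpa using hmono h.le
    have h3 : t • x₀ = (1:ℝ) • x₀ := by rw [one_smul]; exact le_antisymm h1 h2
    have h4 : t = 1 := by
      have h5 := sub_eq_zero.2 h3
      rw [← sub_smul] at h5
      rcases smul_eq_zero.1 h5 with h' | h'
      · exact sub_eq_zero.1 h'
      · exact absurd h' hx₀_ne
    exact absurd h4 (ne_of_gt h)
  have hBbdd : BddBelow B := by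
    refine ⟨0, fun t ht => ?_⟩
    by_contra h
    push_neg at h
    have h1 : x ≤ t • x₀ := ht
    have h2 : t • x₀ ≤ (0:ℝ) • x₀ := hmono h.le
    rw [zero_smul] at h2
    exact hx_ne0 (le_antisymm (h1.trans h2) hx0)
  set a : ℝ := sSup A with ha
  set b : ℝ := sInf B with hb
  have haA : a ∈ A := hAclosed.csSup_mem ⟨0, hA0⟩ hAbdd
  have hbB : b ∈ B := hBclosed.csInf_mem ⟨1, hB1⟩ hBbdd
  have ha0 : 0 ≤ a := le_csSup hAbdd hA0
  have hab : a < b := by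
    by_contra h
    push_neg at h
    have h1 : x ≤ a • x₀ := le_trans hbB (hmono h)
    exact hxne a ha0 (le_antisymm h1 haA)
  set c : ℝ := b - a with hc
  have hcpos : 0 < c := sub_pos.2 hab
  have hy0 : (0:X) ≤ c⁻¹ • (x - a • x₀) := by
    have := hsmul_le (inv_nonneg.2 hcpos.le) (sub_nonneg.2 haA)
    simpa using this
  refine ⟨c⁻¹ • (x - a • x₀), hy0, ?_, ?_⟩
  · -- y₀ ≤ x₀
    have h1 : x - a • x₀ ≤ c • x₀ := by
      rw [sub_le_iff_le_add, ← add_smul]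
      have h2 : c + a = b := by ring
      rw [h2]
      exact hbB
    have h3 := hsmul_le (inv_nonneg.2 hcpos.le) h1
    rwa [inv_smul_smul₀ hcpos.ne'] at h3
  · intro l hl
    constructor
    · intro h
      have h' : c • (l • x₀) ≤ c • (c⁻¹ • (x - a • x₀)) := hsmul_le hcpos.le h
      rw [smul_inv_smul₀ hcpos.ne', smul_smul] at h'
      have hmem : c * l + a ∈ A := by
        rw [hA, Set.mem_setOf_eq, add_smul]
        exact add_le_of_le_sub_right h'
      have := le_csSup hAbdd hmem
      nlinarith
    · intro h
      have h1 : c⁻¹ • (x - a • x₀) ≤ (1 - l) • x₀ := by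
        rw [sub_smul, one_smul]
        exact (sub_le_sub_left h _).trans_eq' (by abel)
      have h2 : x - a • x₀ ≤ (c * (1 - l)) • x₀ := by
        have h3 := hsmul_le hcpos.le h1
        rwa [smul_inv_smul₀ hcpos.ne', smul_smul] at h3
      have hmem : a + c * (1 - l) ∈ B := by
        rw [hB, Set.mem_setOf_eq, add_smul]
        exact sub_le_iff_le_add'.1 h2
      have := csInf_le hBbdd hmem
      nlinarith
end

section
/- Let X be a Banach lattice and suppose there exists a bounded positive linear projection P : X → X (P ∘ P = P, and P maps positive elements to positive elements) whose range is a closed hyperplane of X, i.e., a closed subspace of codimension one. Then X has an atom: there exists a nonzero positive element a ∈ X such that every x with 0 ≤ x ≤ a is a nonnegative scalar multiple of a. -/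
open Filter Topology

section Aux
variable {X : Type*} [NormedAddCommGroup X] [Lattice X] [IsOrderedAddMonoid X] [HasSolidNorm X] [NormedSpace ℝ X]

private lemma pow2_reflect : ∀ (n : ℕ) (y : X), 0 ≤ (2 ^ n : ℝ) • y → 0 ≤ y := by
  intro n
  induction n with
  | zero => intro y h; simpa using h
  | succ n ih =>
    intro y h
    have h2 : (2 ^ (n+1) : ℝ) • y = (2 ^ n : ℝ) • ((2:ℝ) • y) := by
      rw [smul_smul]; ring_nf
    have h3 : 0 ≤ (2:ℝ) • y := ih _ (by rwa [← h2])
    have h4 : (2:ℝ) • y = 2 • y := by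
      rw [← Nat.cast_smul_eq_nsmul ℝ 2 y]; norm_num
    exact nsmul_two_semiclosed (by rwa [h4] at h3)

private lemma real_smul_nonneg {c : ℝ} (hc : 0 ≤ c) {x : X} (hx : 0 ≤ x) :
    0 ≤ c • x := by
  have dyadic : ∀ (m n : ℕ), 0 ≤ ((m : ℝ) / 2 ^ n) • x := by
    intro m n
    apply pow2_reflect n
    have h : (2 ^ n : ℝ) • (((m : ℝ) / 2 ^ n) • x) = (m : ℝ) • x := by
      rw [smul_smul]; congr 1; field_simp
    rw [h, Nat.cast_smul_eq_nsmul]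
    exact nsmul_nonneg hx m
  have tend : Tendsto (fun n : ℕ => ((Nat.floor (c * 2 ^ n) : ℝ) / 2 ^ n)) atTop (nhds c) := by
    have hlow : ∀ n : ℕ, c - (1/2) ^ n ≤ (Nat.floor (c * 2 ^ n) : ℝ) / 2 ^ n := by
      intro n
      have h1 : c * 2 ^ n - 1 ≤ (Nat.floor (c * 2 ^ n) : ℝ) :=
        le_of_lt (Nat.sub_one_lt_floor _)
      have h2 : (0:ℝ) < 2 ^ n := by positivity
      calc c - (1/2)^n = (c * 2 ^ n - 1) / 2 ^ n := by field_simp; rw [sub_mul, ← mul_pow]; norm_num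
      _ ≤ (Nat.floor (c * 2 ^ n) : ℝ) / 2 ^ n := by gcongr
    have hhigh : ∀ n : ℕ, (Nat.floor (c * 2 ^ n) : ℝ) / 2 ^ n ≤ c := by
      intro n
      rw [div_le_iff₀ (by positivity : (0:ℝ) < 2 ^ n)]
      exact Nat.floor_le (by positivity)
    have t1 : Tendsto (fun n : ℕ => c - (1/2:ℝ) ^ n) atTop (nhds c) := by
      have := tendsto_pow_atTop_nhds_zero_of_lt_one (by norm_num : (0:ℝ) ≤ 1/2) (by norm_num)
      simpa using (tendsto_const_nhds (x := c)).sub this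
    exact tendsto_of_tendsto_of_tendsto_of_le_of_le t1 tendsto_const_nhds hlow hhigh
  have tend2 : Tendsto (fun n : ℕ => ((Nat.floor (c * 2 ^ n) : ℝ) / 2 ^ n) • x) atTop (nhds (c • x)) :=
    tend.smul_const x
  exact ge_of_tendsto tend2 (Eventually.of_forall fun n => dyadic _ _)

private lemma smul_mono' (c : ℝ) (hc : 0 ≤ c) {a b : X} (h : a ≤ b) : c • a ≤ c • b := by
  have := real_smul_nonneg hc (sub_nonneg.2 h)
  rwa [smul_sub, sub_nonneg] at this

end Aux
section Aux2
variable {X : Type*} [NormedAddCommGroup X] [Lattice X] [IsOrderedAddMonoid X] [HasSolidNorm X] [NormedSpace ℝ X]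

private lemma smul_posPart_le {e x : X} {q : ℝ} (hq : 0 ≤ q) (hx : 0 ≤ x)
    (h : q • e ≤ x) : q • e⁺ ≤ x := by
  rcases hq.eq_or_lt with h0 | h0
  · rw [← h0, zero_smul]; exact hx
  · have hinv : (0:ℝ) ≤ q⁻¹ := by positivity
    have he : e ≤ q⁻¹ • x := by
      have h2 := smul_mono' q⁻¹ hinv h
      rwa [inv_smul_smul₀ h0.ne'] at h2
    have hsup : e⁺ ≤ q⁻¹ • x := by
      rw [posPart_def]
      exact sup_le he (real_smul_nonneg hinv hx)
    have h3 := smul_mono' q hq hsup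
    rwa [smul_inv_smul₀ h0.ne'] at h3

/-- If `ψ x • e ≤ x` for all `x ≥ 0` and `e⁻ ≠ 0`, then `ψ` is nonnegative on `[0, e⁺]`. -/
private lemma psi_nonneg (e : X) (ψ : X → ℝ)
    (key : ∀ x : X, 0 ≤ x → ψ x • e ≤ x) (hn : e⁻ ≠ 0)
    {z : X} (hz : 0 ≤ z) (hze : z ≤ e⁺) : 0 ≤ ψ z := by
  by_contra hs
  push_neg at hs
  set s := ψ z with hsdef
  have hk := key z hz
  have h2' : 0 ≤ z - s • e⁺ - (-s) • e⁻ := by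
    have expand : z - s • e⁺ - (-s) • e⁻ = z - s • e := by
      have h4 : s • e = s • e⁺ - s • e⁻ := by rw [← smul_sub, posPart_sub_negPart]
      rw [h4, neg_smul]; abel
    rw [expand]
    exact sub_nonneg.2 hk
  have h2 : (-s) • e⁻ ≤ z - s • e⁺ := by
    rw [← sub_nonneg]; exact h2'
  have h3 : z - s • e⁺ ≤ (1 - s) • e⁺ := by
    rw [sub_smul, one_smul]
    exact sub_le_sub_right hze _
  have h1 : (-s) • e⁻ ≤ (1 - s) • e⁺ := h2.trans h3
  have hs1 : (0:ℝ) < 1 - s := by linarith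
  set u : X := ((-s)/(1-s)) • e⁻ with hu
  have hu0 : 0 ≤ u := real_smul_nonneg (div_nonneg (by linarith) hs1.le) (negPart_nonneg e)
  have hup : u ≤ e⁺ := by
    have := smul_mono' (1-s)⁻¹ (by positivity) h1
    rw [smul_smul, smul_smul, inv_mul_cancel₀ hs1.ne', one_smul] at this
    rwa [hu, div_eq_inv_mul]
  have hun : u ≤ e⁻ := by
    have hle : (-s)/(1-s) ≤ 1 := by
      rw [div_le_one hs1]; linarith
    have := real_smul_nonneg (sub_nonneg.2 hle) (negPart_nonneg e)
    rw [sub_smul, one_smul, sub_nonneg] at this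
    exact this
  have huz : u = 0 := le_antisymm
    ((le_inf hup hun).trans (posPart_inf_negPart_eq_zero e).le) hu0
  rw [hu, smul_eq_zero] at huz
  rcases huz with h | h
  · have : (0:ℝ) < -s := by linarith
    rw [div_eq_zero_iff] at h
    rcases h with h | h
    · linarith
    · linarith
  · exact hn h

end Aux2
section Aux3
variable {X : Type*} [NormedAddCommGroup X] [Lattice X] [IsOrderedAddMonoid X] [HasSolidNorm X] [NormedSpace ℝ X]

private lemma kernel_atom (a : X) (χ : X → ℝ) (ha : 0 ≤ a) (hane : a ≠ 0)
    (hdec : ∀ x : X, 0 ≤ x → x ≤ a → x = χ x • a) :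
    ∃ b : X, 0 ≤ b ∧ b ≠ 0 ∧ ∀ x : X, 0 ≤ x → x ≤ b → ∃ t : ℝ, 0 ≤ t ∧ x = t • b := by
  refine ⟨a, ha, hane, ?_⟩
  intro x hx hxa
  rcases le_or_gt 0 (χ x) with h | h
  · exact ⟨χ x, h, hdec x hx hxa⟩
  · have hx0 : x = 0 := by
      have h1 : 0 ≤ -(χ x • a) := by
        have := real_smul_nonneg (by linarith : (0:ℝ) ≤ -(χ x)) ha
        rwa [neg_smul] at this
      have h2 : x ≤ 0 := by
        rw [hdec x hx hxa]
        exact neg_nonneg.1 h1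
      exact le_antisymm h2 hx
    exact ⟨0, le_rfl, by rw [hx0, zero_smul]⟩

private lemma atom_aux (e : X) (ψ : X →L[ℝ] ℝ)
    (key : ∀ x : X, 0 ≤ x → ψ x • e ≤ x)
    (hψe : ψ e = 1) (hp : e⁺ ≠ 0) (hn : e⁻ ≠ 0) (hc : 0 < ψ e⁺) :
    ∃ a : X, 0 ≤ a ∧ a ≠ 0 ∧ ∀ x : X, 0 ≤ x → x ≤ a → ∃ t : ℝ, 0 ≤ t ∧ x = t • a := by
  set c := ψ e⁺ with hcdef
  have hψen : ψ e⁻ = c - 1 := by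
    have h0 := posPart_sub_negPart e
    rw [sub_eq_iff_eq_add] at h0
    have h : e⁻ = e⁺ - e := by rw [h0]; abel
    rw [h, map_sub, hψe, hcdef]
  have hc1 : c ≤ 1 := by
    have key' : ∀ x : X, 0 ≤ x → (fun y => -(ψ y)) x • (-e) ≤ x := by
      intro x hx; simpa [neg_smul, smul_neg] using key x hx
    have h := psi_nonneg (-e) (fun y => -(ψ y)) key' (by rw [negPart_neg]; exact hp)
      (negPart_nonneg e) (le_of_eq (posPart_neg e).symm)
    simp only [hψen] at h
    linarith
  refine ⟨e⁺, posPart_nonneg e, hp, ?_⟩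
  intro x hx hxe
  set s := ψ x with hsdef
  have hs0 : 0 ≤ s := psi_nonneg e ψ key hn hx hxe
  have hsc : s ≤ c := by
    have h0 : (0:X) ≤ e⁺ - x := sub_nonneg.2 hxe
    have h1 : e⁺ - x ≤ e⁺ := sub_le_self _ hx
    have h2 := psi_nonneg e ψ key hn h0 h1
    rw [map_sub] at h2
    rw [hsdef, hcdef]; linarith
  set r : ℝ := 1 - c with hrdef
  have hr0 : (0:ℝ) ≤ r := by rw [hrdef]; linarith
  have hr1 : r < 1 := by rw [hrdef]; linarith
  have hrpow : ∀ n : ℕ, (0:ℝ) ≤ r ^ n := fun n => pow_nonneg hr0 n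
  have main : ∀ n : ℕ, 0 ≤ x - (s * (1 - r ^ n) / c) • e⁺ ∧
      x - (s * (1 - r ^ n) / c) • e⁺ ≤ r ^ n • e⁺ := by
    intro n
    induction n with
    | zero =>
      constructor
      · simpa using hx
      · simpa using hxe
    | succ n ih =>
      obtain ⟨h1, h2⟩ := ih
      set y : X := x - (s * (1 - r ^ n) / c) • e⁺ with hy
      have hψy : ψ y = s * r ^ n := by
        rw [hy, map_sub, map_smul, smul_eq_mul, ← hsdef, ← hcdef, hrdef]
        field_simp
        ring
      have ha : (s * r ^ n) • e⁺ ≤ y :=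
        smul_posPart_le (mul_nonneg hs0 (hrpow n)) h1 (by rw [← hψy]; exact key y h1)
      have hz0 : (0:X) ≤ r ^ n • e⁺ - y := sub_nonneg.2 h2
      have hψz : ψ (r ^ n • e⁺ - y) = (c - s) * r ^ n := by
        rw [map_sub, map_smul, smul_eq_mul, hψy, ← hcdef]; ring
      have hb : ((c - s) * r ^ n) • e⁺ ≤ r ^ n • e⁺ - y :=
        smul_posPart_le (mul_nonneg (by linarith) (hrpow n)) hz0
          (by rw [← hψz]; exact key _ hz0)
      have hts : (s * (1 - r ^ (n+1)) / c) • e⁺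
          = (s * (1 - r ^ n) / c) • e⁺ + (s * r ^ n) • e⁺ := by
        rw [← add_smul]; congr 1
        rw [hrdef]; field_simp; ring
      have hnext : x - (s * (1 - r ^ (n+1)) / c) • e⁺ = y - (s * r ^ n) • e⁺ := by
        rw [hy, hts]; abel
      constructor
      · rw [hnext]; exact sub_nonneg.2 ha
      · rw [hnext]
        have hyb : y ≤ r ^ n • e⁺ - ((c - s) * r ^ n) • e⁺ := le_sub_comm.1 hb
        have hcomb : r ^ n • e⁺ - ((c - s) * r ^ n) • e⁺
            = (r ^ (n+1) + s * r ^ n) • e⁺ := by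
          rw [← sub_smul]; congr 1; rw [hrdef]; ring
        have hfin : (r ^ (n+1) + s * r ^ n) • e⁺ - (s * r ^ n) • e⁺ = r ^ (n+1) • e⁺ := by
          rw [← sub_smul]; congr 1; ring
        rw [← hfin]
        exact sub_le_sub_right (hyb.trans_eq hcomb) _
  have hnorm : ∀ n : ℕ, ‖x - (s * (1 - r ^ n) / c) • e⁺‖ ≤ ‖e⁺‖ * r ^ n := by
    intro n
    obtain ⟨h1, h2⟩ := main n
    have habs : |x - (s * (1 - r ^ n) / c) • e⁺| ≤ |r ^ n • e⁺| := by
      rw [abs_of_nonneg h1, abs_of_nonneg (real_smul_nonneg (hrpow n) (posPart_nonneg e))]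
      exact h2
    calc ‖x - (s * (1 - r ^ n) / c) • e⁺‖ ≤ ‖r ^ n • e⁺‖ := norm_le_norm_of_abs_le_abs habs
    _ = ‖e⁺‖ * r ^ n := by
        rw [norm_smul, Real.norm_eq_abs, abs_of_nonneg (hrpow n)]; ring
  have hy0 : Tendsto (fun n : ℕ => x - (s * (1 - r ^ n) / c) • e⁺) atTop (nhds 0) := by
    apply squeeze_zero_norm hnorm
    have h := tendsto_pow_atTop_nhds_zero_of_lt_one hr0 hr1
    simpa using h.const_mul ‖e⁺‖
  have ht : Tendsto (fun n : ℕ => s * (1 - r ^ n) / c) atTop (nhds (s / c)) := by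
    have h := tendsto_pow_atTop_nhds_zero_of_lt_one hr0 hr1
    have h2 : Tendsto (fun n : ℕ => s * (1 - r ^ n) / c) atTop (nhds (s * (1 - 0) / c)) :=
      (((tendsto_const_nhds (x := (1:ℝ))).sub h).const_mul s).div_const c
    simpa using h2
  have hts2 : Tendsto (fun n : ℕ => (s * (1 - r ^ n) / c) • e⁺) atTop (nhds ((s/c) • e⁺)) :=
    ht.smul_const e⁺
  have hxlim : Tendsto (fun _ : ℕ => x) atTop (nhds (0 + (s/c) • e⁺)) := by
    have h := hy0.add hts2
    have heq : (fun n : ℕ => (x - (s * (1 - r ^ n) / c) • e⁺) + (s * (1 - r ^ n) / c) • e⁺)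
        = fun _ : ℕ => x := by funext n; abel
    rwa [heq] at h
  refine ⟨s / c, div_nonneg hs0 hc.le, ?_⟩
  have huniq := tendsto_nhds_unique hxlim (tendsto_const_nhds (x := x))
  rw [zero_add] at huniq
  exact huniq.symm

end Aux3
/-- **Statement 16.** Let `X` be a Banach lattice admitting a bounded positive linear
projection `P : X → X` whose range is a closed hyperplane of `X` (the kernel of a
nonzero bounded linear functional). Then `X` has an atom: a nonzero positive element
`a` such that every `x` with `0 ≤ x ≤ a` is a nonnegative scalar multiple of `a`. -/
theorem has_atom_of_positive_projection_onto_hyperplane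
    (X : Type*) [NormedAddCommGroup X] [Lattice X] [IsOrderedAddMonoid X] [HasSolidNorm X] [NormedSpace ℝ X] [CompleteSpace X]
    (P : X →L[ℝ] X) (hproj : P.comp P = P)
    (hpos : ∀ x : X, 0 ≤ x → 0 ≤ P x)
    (hhyperplane : ∃ φ : X →L[ℝ] ℝ, φ ≠ 0 ∧ Set.range P = {x : X | φ x = 0}) :
    ∃ a : X, 0 ≤ a ∧ a ≠ 0 ∧ ∀ x : X, 0 ≤ x → x ≤ a → ∃ t : ℝ, 0 ≤ t ∧ x = t • a := by
  obtain ⟨φ, hφ, hrange⟩ := hhyperplane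
  obtain ⟨x₀, hx₀⟩ : ∃ x₀ : X, φ x₀ ≠ 0 := by
    by_contra h
    push_neg at h
    exact hφ (by ext y; simpa using h y)
  have hPP : ∀ y : X, P (P y) = P y := by
    intro y
    simpa using DFunLike.congr_fun hproj y
  have hφP : ∀ y : X, φ (P y) = 0 := by
    intro y
    have h : P y ∈ Set.range P := ⟨y, rfl⟩
    rwa [hrange] at h
  set e : X := x₀ - P x₀ with he
  have hφe : φ e ≠ 0 := by
    rw [he, map_sub, hφP, sub_zero]; exact hx₀
  have hPe : P e = 0 := by rw [he, map_sub, hPP, sub_self]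
  set ψ : X →L[ℝ] ℝ := (φ e)⁻¹ • φ with hψdef
  have hψapp : ∀ x : X, ψ x = (φ e)⁻¹ * φ x := fun x => rfl
  have hψe : ψ e = 1 := by rw [hψapp, inv_mul_cancel₀ hφe]
  have hdec : ∀ x : X, x - P x = ψ x • e := by
    intro x
    set z : X := x - P x - ψ x • e with hz
    have hz1 : P z = 0 := by
      rw [hz, map_sub, map_sub, map_smul, hPP, hPe, smul_zero, sub_self, sub_zero]
    have hz2 : φ z = 0 := by
      rw [hz, map_sub, map_sub, map_smul, hφP, sub_zero, hψapp, smul_eq_mul]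
      field_simp; simp
    have hz3 : z ∈ Set.range P := by rw [hrange]; exact hz2
    obtain ⟨u, hu⟩ := hz3
    have hzz : P z = z := by rw [← hu, hPP]
    have hz0 : z = 0 := by rw [← hzz, hz1]
    rw [hz, sub_eq_zero] at hz0
    exact hz0
  have key : ∀ x : X, 0 ≤ x → ψ x • e ≤ x := by
    intro x hx
    rw [← hdec x]
    exact sub_le_self x (hpos x hx)
  have hene : e ≠ 0 := by
    intro h
    rw [h, map_zero] at hψe
    norm_num at hψe
  by_cases hnz : e⁻ = 0
  · -- e is positive: kernel atom e
    have he0 : 0 ≤ e := by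
      have h0 := posPart_sub_negPart e
      rw [hnz, sub_zero] at h0
      rw [← h0]; exact posPart_nonneg e
    apply kernel_atom e (fun x => ψ x) he0 hene
    intro x hx hxa
    have hPx0 : P x = 0 := by
      have h1 : 0 ≤ P x := hpos x hx
      have h2 : 0 ≤ P (e - x) := hpos _ (sub_nonneg.2 hxa)
      rw [map_sub, hPe, zero_sub, neg_nonneg] at h2
      exact le_antisymm h2 h1
    have h3 := hdec x
    rwa [hPx0, sub_zero] at h3
  · by_cases hpz : e⁺ = 0
    · -- -e is positive: kernel atom -e
      have h0 := posPart_sub_negPart e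
      rw [hpz, zero_sub] at h0
      have hme : -e = e⁻ := by
        have h1 := congrArg Neg.neg h0
        simpa using h1.symm
      have hne0 : 0 ≤ -e := by rw [hme]; exact negPart_nonneg e
      have hnene : -e ≠ 0 := by
        intro h
        exact hene (neg_eq_zero.1 h)
      apply kernel_atom (-e) (fun x => -(ψ x)) hne0 hnene
      intro x hx hxa
      have hPx0 : P x = 0 := by
        have h1 : 0 ≤ P x := hpos x hx
        have h2 : 0 ≤ P (-e - x) := hpos _ (sub_nonneg.2 hxa)
        rw [map_sub, map_neg, hPe, neg_zero, zero_sub, neg_nonneg] at h2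
        exact le_antisymm h2 h1
      have h3 := hdec x
      rw [hPx0, sub_zero] at h3
      calc x = ψ x • e := h3
      _ = -(ψ x) • -e := by rw [neg_smul, smul_neg, neg_neg]
    · -- both parts nonzero
      have hc0 : 0 ≤ ψ e⁺ := psi_nonneg e (fun x => ψ x) key hnz (posPart_nonneg e) le_rfl
      rcases hc0.eq_or_lt with hc | hc
      · -- ψ e⁺ = 0 : use -e and -ψ
        have key' : ∀ x : X, 0 ≤ x → (-ψ) x • (-e) ≤ x := by
          intro x hx
          simpa [neg_smul, smul_neg] using key x hx
        have h1 : (-ψ) (-e) = 1 := by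
          rw [ContinuousLinearMap.neg_apply, map_neg, hψe, neg_neg]
        have h2 : (-e)⁺ ≠ 0 := by rw [posPart_neg]; exact hnz
        have h3 : (-e)⁻ ≠ 0 := by rw [negPart_neg]; exact hpz
        have h4 : 0 < (-ψ) ((-e)⁺) := by
          rw [posPart_neg, ContinuousLinearMap.neg_apply]
          have h5 := posPart_sub_negPart e
          rw [sub_eq_iff_eq_add] at h5
          have h6 : e⁻ = e⁺ - e := by rw [h5]; abel
          have h7 : ψ e⁻ = ψ e⁺ - 1 := by rw [h6, map_sub, hψe]
          rw [h7, ← hc]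
          norm_num
        exact atom_aux (-e) (-ψ) key' h1 h2 h3 h4
      · exact atom_aux e ψ key hψe hpz hnz hc
end
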